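/- Let A be an m×m real symmetrizable matrix with m ≥ 2, let λ_1 ≤ λ_2 ≤ ... ≤ λ_m be its eigenvalues listed with multiplicity (they are all real), let k ∈ {1,...,m}, and let A_k be the (m−1)×(m−1) principal submatrix of A obtained by deleting row k and column k. Then for every p with 1 ≤ p ≤ m, one has (−1)^{p−1} · det(A_k − λ_p I_{m−1}) ≥ 0. -/

import Mathlib

open Polynomial Matrix Finset

/-- A real square matrix is *symmetrizable* if some diagonal matrix with
strictly positive entries makes it symmetric by left multiplication. -/
def Matrix.Symmetrizable {n : Type*} [Fintype n] [DecidableEq n]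
    (A : Matrix n n ℝ) : Prop :=
  ∃ d : n → ℝ, (∀ i, 0 < d i) ∧ (Matrix.diagonal d * A).IsSymm

/-- Let `A` be an `(n+1) × (n+1)` real symmetrizable matrix (`n + 1 ≥ 2`) with
(real) eigenvalues `lam 0 ≤ lam 1 ≤ ⋯ ≤ lam n` listed with multiplicity, and
let `A_k` be the principal submatrix obtained by deleting row `k` and column
`k`. Then `(-1)^p · det (A_k - lam p • I) ≥ 0` for every `p` (with zero-based
indexing, matching `(-1)^{p-1}` for one-based indexing). -/

lemma eval_charpoly' {m : ℕ} (A : Matrix (Fin m) (Fin m) ℝ) (x : ℝ) :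
    A.charpoly.eval x = (x • (1 : Matrix (Fin m) (Fin m) ℝ) - A).det := by
  rw [Matrix.charpoly, ← Polynomial.coe_evalRingHom, RingHom.map_det]
  congr 1
  ext i j
  rcases eq_or_ne i j with rfl | h
  · simp [Matrix.charmatrix_apply, Matrix.one_apply]
  · simp [Matrix.charmatrix_apply_ne _ _ _ h, Matrix.one_apply_ne h]

lemma det_conj_diag {m : ℕ} (e f : Fin m → ℝ) (hef : ∀ i, e i * f i = 1)
    (C : Matrix (Fin m) (Fin m) ℝ) (x : ℝ) :
    (x • (1 : Matrix (Fin m) (Fin m) ℝ) - Matrix.diagonal e * C * Matrix.diagonal f).det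
      = (x • (1 : Matrix (Fin m) (Fin m) ℝ) - C).det := by
  have h1 : Matrix.diagonal e * Matrix.diagonal f = 1 := by
    rw [Matrix.diagonal_mul_diagonal]
    have : (fun i => e i * f i) = fun _ => (1:ℝ) := funext hef
    rw [this, Matrix.diagonal_one]
  have key : x • (1 : Matrix (Fin m) (Fin m) ℝ) - Matrix.diagonal e * C * Matrix.diagonal f
      = Matrix.diagonal e * (x • 1 - C) * Matrix.diagonal f := by
    rw [Matrix.mul_sub, Matrix.sub_mul]
    congr 1
    rw [Matrix.mul_smul, Matrix.smul_mul, Matrix.mul_one, h1]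
  rw [key, Matrix.det_mul, Matrix.det_mul, mul_comm, ← mul_assoc, ← Matrix.det_mul]
  have h2 : Matrix.diagonal f * Matrix.diagonal e = 1 := by
    rw [Matrix.diagonal_mul_diagonal]
    have : (fun i => f i * e i) = fun _ => (1:ℝ) := funext fun i => by
      rw [mul_comm]; exact hef i
    rw [this, Matrix.diagonal_one]
  rw [h2, Matrix.det_one, one_mul]

lemma conj_smul_sub {m : ℕ} (U V N : Matrix (Fin m) (Fin m) ℝ) (hUV : U * V = 1) (x : ℝ) :
    x • (1 : Matrix (Fin m) (Fin m) ℝ) - U * N * V = U * (x • 1 - N) * V := by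
  rw [Matrix.mul_sub, Matrix.sub_mul]
  congr 1
  rw [Matrix.mul_smul, Matrix.smul_mul, Matrix.mul_one, hUV]

lemma det_conj_unit {m : ℕ} (U V M : Matrix (Fin m) (Fin m) ℝ) (hVU : V * U = 1) :
    (U * M * V).det = M.det := by
  rw [Matrix.det_mul, Matrix.det_mul, mul_comm, ← mul_assoc, ← Matrix.det_mul, hVU,
    Matrix.det_one, one_mul]

lemma smul_one_sub_diagonal {m : ℕ} (x : ℝ) (v : Fin m → ℝ) :
    x • (1 : Matrix (Fin m) (Fin m) ℝ) - Matrix.diagonal v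
      = Matrix.diagonal (fun i => x - v i) := by
  ext i j
  rcases eq_or_ne i j with rfl | h
  · simp
  · simp [Matrix.one_apply_ne h, Matrix.diagonal_apply_ne _ h]


lemma sign_prod_erase {n : ℕ} (lam : Fin (n+1) → ℝ) (hlam : Monotone lam) (p : Fin (n+1)) :
    0 ≤ (-1 : ℝ) ^ (n - (p : ℕ)) * ∏ j ∈ univ.erase p, (lam p - lam j) := by
  have hsplit : univ.erase p = Finset.Iio p ∪ Finset.Ioi p := by
    ext j
    simp only [Finset.mem_erase, Finset.mem_univ, and_true, Finset.mem_union, Finset.mem_Iio,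
      Finset.mem_Ioi]
    exact ⟨fun h => Ne.lt_or_gt h, fun h => h.elim ne_of_lt ne_of_gt⟩
  have hdisj : Disjoint (Finset.Iio p) (Finset.Ioi p) := by
    simp only [Finset.disjoint_left, Finset.mem_Iio, Finset.mem_Ioi]
    exact fun a ha => not_lt.2 ha.le
  have h1 : 0 ≤ ∏ j ∈ Finset.Iio p, (lam p - lam j) :=
    Finset.prod_nonneg fun j hj => sub_nonneg.2 (hlam (Finset.mem_Iio.1 hj).le)
  have hcard : (Finset.Ioi p).card = n - (p : ℕ) := by
    rw [Fin.card_Ioi]; omega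
  have h2 : ∏ j ∈ Finset.Ioi p, (lam j - lam p)
      = (-1:ℝ)^((Finset.Ioi p).card) * ∏ j ∈ Finset.Ioi p, (lam p - lam j) := by
    rw [← Finset.prod_const, ← Finset.prod_mul_distrib]
    exact Finset.prod_congr rfl fun j _ => by ring
  have h3 : 0 ≤ ∏ j ∈ Finset.Ioi p, (lam j - lam p) :=
    Finset.prod_nonneg fun j hj => sub_nonneg.2 (hlam (Finset.mem_Ioi.1 hj).le)
  rw [hsplit, Finset.prod_union hdisj, ← hcard, mul_comm ((-1:ℝ)^_) _, mul_assoc, mul_comm _ ((-1:ℝ)^_), ← h2]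
  exact mul_nonneg h1 h3

lemma sign_prod_erase' {n : ℕ} (lam eig : Fin (n+1) → ℝ) (hlam : Monotone lam)
    (hms : Finset.univ.val.map eig = Finset.univ.val.map lam) (p i : Fin (n+1)) :
    0 ≤ (-1 : ℝ) ^ (n - (p : ℕ)) * ∏ j ∈ univ.erase i, (lam p - eig j) := by
  have hprod : ∏ j ∈ univ.erase i, (lam p - eig j)
      = (((Finset.univ.val.map lam).erase (eig i)).map (fun y => lam p - y)).prod := by
    rw [Finset.prod_eq_multiset_prod, Finset.erase_val,
      show (fun j => lam p - eig j) = (fun y => lam p - y) ∘ eig from rfl,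
      ← Multiset.map_map, Multiset.map_erase_of_mem eig _ (by simp), hms]
  rcases eq_or_ne (eig i) (lam p) with he | he
  · rw [hprod, he, ← Multiset.map_erase_of_mem lam _ (by simp : p ∈ Finset.univ.val),
      Multiset.map_map, ← Finset.erase_val, ← Finset.prod_eq_multiset_prod]
    exact sign_prod_erase lam hlam p
  · have h0 : (0 : ℝ) ∈ ((Finset.univ.val.map lam).erase (eig i)).map (fun y => lam p - y) := by
      refine Multiset.mem_map.2 ⟨lam p, ?_, sub_self _⟩
      exact (Multiset.mem_erase_of_ne (Ne.symm he)).2 (Multiset.mem_map_of_mem lam (by simp : p ∈ Finset.univ.val))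
    rw [hprod, Multiset.prod_eq_zero h0, mul_zero]

theorem symmetrizable_submatrix_charpoly_sign' (n : ℕ) (hn : 1 ≤ n)
    (A : Matrix (Fin (n + 1)) (Fin (n + 1)) ℝ)
    (hA : ∃ d : Fin (n+1) → ℝ, (∀ i, 0 < d i) ∧ (Matrix.diagonal d * A).IsSymm)
    (lam : Fin (n + 1) → ℝ) (hlam : Monotone lam)
    (hlamEig : A.charpoly = ∏ i, (X - C (lam i)))
    (k : Fin (n + 1)) :
    ∀ p : Fin (n + 1),
      0 ≤ (-1 : ℝ) ^ (p : ℕ) *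
        (A.submatrix k.succAbove k.succAbove -
          lam p • (1 : Matrix (Fin n) (Fin n) ℝ)).det := by
  classical
  intro p
  obtain ⟨d, hd, hsym⟩ := hA
  set e : Fin (n+1) → ℝ := fun i => Real.sqrt (d i) with he
  have hepos : ∀ i, 0 < e i := fun i => Real.sqrt_pos.2 (hd i)
  set f : Fin (n+1) → ℝ := fun i => (e i)⁻¹ with hf
  have hef : ∀ i, e i * f i = 1 := fun i => mul_inv_cancel₀ (hepos i).ne'
  have hd2 : ∀ i, e i * e i = d i := fun i => Real.mul_self_sqrt (hd i).le
  set B := Matrix.diagonal e * A * Matrix.diagonal f with hB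
  have hBapp : ∀ i j, B i j = e i * A i j * f j := by
    intro i j
    rw [hB, Matrix.mul_diagonal, Matrix.diagonal_mul]
  have hsym' : ∀ i j, d i * A i j = d j * A j i := by
    intro i j
    have h := congrFun (congrFun hsym j) i
    rwa [Matrix.transpose_apply, Matrix.diagonal_mul, Matrix.diagonal_mul] at h
  have hBsymm : B.IsHermitian := by
    ext i j
    rw [Matrix.conjTranspose_apply, star_trivial, hBapp i j, hBapp j i, hf]
    have hi := (hepos i).ne'
    have hj := (hepos j).ne'
    field_simp
    linear_combination A j i * hd2 j - A i j * hd2 i + hsym' j i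
  set U : Matrix (Fin (n+1)) (Fin (n+1)) ℝ := ((hBsymm.eigenvectorUnitary : Matrix.unitaryGroup (Fin (n+1)) ℝ) : Matrix (Fin (n+1)) (Fin (n+1)) ℝ) with hU
  set V : Matrix (Fin (n+1)) (Fin (n+1)) ℝ := star U with hV
  have hUV : U * V = 1 := (Matrix.mem_unitaryGroup_iff).mp hBsymm.eigenvectorUnitary.2
  have hVU : V * U = 1 := (Matrix.mem_unitaryGroup_iff').mp hBsymm.eigenvectorUnitary.2
  set eig : Fin (n+1) → ℝ := hBsymm.eigenvalues with heig
  have hspec : B = U * Matrix.diagonal eig * V := by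
    have h := hBsymm.spectral_theorem
    rwa [show (RCLike.ofReal ∘ hBsymm.eigenvalues : Fin (n+1) → ℝ) = eig from funext fun i => by
      simp [heig]] at h
  -- determinant of x•1 - B
  have hBchar : ∀ x : ℝ, (x • (1 : Matrix (Fin (n+1)) (Fin (n+1)) ℝ) - B).det
      = ∏ i, (x - eig i) := by
    intro x
    rw [hspec, conj_smul_sub U V _ hUV, det_conj_unit U V _ hVU, smul_one_sub_diagonal,
      Matrix.det_diagonal]
  have hAchar : ∀ x : ℝ, (x • (1 : Matrix (Fin (n+1)) (Fin (n+1)) ℝ) - A).det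
      = ∏ i, (x - lam i) := by
    intro x
    rw [← eval_charpoly', hlamEig]
    simp [eval_prod]
  have hdet_eq : ∀ x : ℝ, (x • (1 : Matrix (Fin (n+1)) (Fin (n+1)) ℝ) - A).det
      = (x • (1 : Matrix (Fin (n+1)) (Fin (n+1)) ℝ) - B).det := by
    intro x
    rw [hB]
    exact (det_conj_diag e f hef A x).symm
  have hms : Finset.univ.val.map eig = Finset.univ.val.map lam := by
    have hpoly : (∏ i, (X - C (eig i))) = ∏ i, (X - C (lam i)) := by
      apply Polynomial.funext
      intro x
      simp only [eval_prod, eval_sub, eval_X, eval_C]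
      rw [← hBchar x, ← hdet_eq x, hAchar x]
    have h := congrArg Polynomial.roots hpoly
    rwa [Finset.prod_eq_multiset_prod, Finset.prod_eq_multiset_prod,
      show Multiset.map (fun i => X - C (eig i)) Finset.univ.val
        = Multiset.map (fun a : ℝ => X - C a) (Finset.univ.val.map eig) from
        (Multiset.map_map (fun a : ℝ => X - C a) eig Finset.univ.val).symm,
      show Multiset.map (fun i => X - C (lam i)) Finset.univ.val
        = Multiset.map (fun a : ℝ => X - C a) (Finset.univ.val.map lam) from
        (Multiset.map_map (fun a : ℝ => X - C a) lam Finset.univ.val).symm,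
      Polynomial.roots_multiset_prod_X_sub_C, Polynomial.roots_multiset_prod_X_sub_C] at h
  -- adjugate computation
  set M := lam p • (1 : Matrix (Fin (n+1)) (Fin (n+1)) ℝ) - B with hM
  set c : Fin (n+1) → ℝ := fun i => ∏ j ∈ univ.erase i, (lam p - eig j) with hc
  have hadjU : Matrix.adjugate U = U.det • V := by
    have h := Matrix.adjugate_mul U
    calc Matrix.adjugate U = Matrix.adjugate U * (U * V) := by rw [hUV, Matrix.mul_one]
      _ = (Matrix.adjugate U * U) * V := by rw [Matrix.mul_assoc]
      _ = U.det • V := by rw [h, Matrix.smul_mul, Matrix.one_mul]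
  have hadjV : Matrix.adjugate V = V.det • U := by
    have h := Matrix.adjugate_mul V
    calc Matrix.adjugate V = Matrix.adjugate V * (V * U) := by rw [hVU, Matrix.mul_one]
      _ = (Matrix.adjugate V * V) * U := by rw [Matrix.mul_assoc]
      _ = V.det • U := by rw [h, Matrix.smul_mul, Matrix.one_mul]
  have hdetVU : V.det * U.det = 1 := by
    rw [← Matrix.det_mul, hVU, Matrix.det_one]
  have hadjM : Matrix.adjugate M = U * Matrix.diagonal c * V := by
    rw [hM, hspec, conj_smul_sub U V _ hUV, smul_one_sub_diagonal,
      Matrix.adjugate_mul_distrib, Matrix.adjugate_mul_distrib, hadjU, hadjV,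
      Matrix.adjugate_diagonal]
    rw [Matrix.smul_mul, Matrix.mul_smul, Matrix.mul_smul, smul_smul, hdetVU, one_smul]
    rw [Matrix.mul_assoc]
  have hentry : Matrix.adjugate M k k = ∑ i, c i * (U k i)^2 := by
    rw [hadjM]
    rw [Matrix.mul_apply]
    refine Finset.sum_congr rfl fun j _ => ?_
    rw [Matrix.mul_diagonal, hV, Matrix.star_apply, star_trivial]
    ring
  have hsign : 0 ≤ (-1:ℝ)^(n - (p:ℕ)) * Matrix.adjugate M k k := by
    rw [hentry, Finset.mul_sum]
    refine Finset.sum_nonneg fun i _ => ?_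
    have h := sign_prod_erase' lam eig hlam hms p i
    calc (0:ℝ) ≤ ((-1:ℝ)^(n - (p:ℕ)) * c i) * (U k i)^2 :=
          mul_nonneg h (sq_nonneg _)
      _ = (-1:ℝ)^(n - (p:ℕ)) * (c i * (U k i)^2) := by ring
  have hminor : (M.submatrix k.succAbove k.succAbove).det = Matrix.adjugate M k k := by
    rw [Matrix.adjugate_fin_succ_eq_det_submatrix]
    have : ((-1:ℝ))^((k:ℕ) + k) = 1 := by
      rw [← two_mul]
      exact (even_two_mul _).neg_one_pow
    rw [this, one_mul]
  have hsub : M.submatrix k.succAbove k.succAbove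
      = lam p • (1 : Matrix (Fin n) (Fin n) ℝ) - B.submatrix k.succAbove k.succAbove := by
    ext i j
    rcases eq_or_ne i j with rfl | h
    · simp [hM]
    · have h' : k.succAbove i ≠ k.succAbove j := fun hh => h (Fin.succAbove_right_injective hh)
      simp [hM, Matrix.one_apply_ne h, Matrix.one_apply_ne h']
  have hBsubm : B.submatrix k.succAbove k.succAbove
      = Matrix.diagonal (e ∘ k.succAbove) * A.submatrix k.succAbove k.succAbove
        * Matrix.diagonal (f ∘ k.succAbove) := by
    ext i j
    rw [Matrix.mul_diagonal, Matrix.diagonal_mul, Matrix.submatrix_apply,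
      Matrix.submatrix_apply, hBapp]
    rfl
  have hdetsub : (M.submatrix k.succAbove k.succAbove).det
      = (lam p • (1 : Matrix (Fin n) (Fin n) ℝ) - A.submatrix k.succAbove k.succAbove).det := by
    rw [hsub, hBsubm]
    exact det_conj_diag _ _ (fun i => hef _) _ _
  have hfinal : (A.submatrix k.succAbove k.succAbove - lam p • (1 : Matrix (Fin n) (Fin n) ℝ)).det
      = (-1:ℝ)^n * Matrix.adjugate M k k := by
    rw [show A.submatrix k.succAbove k.succAbove - lam p • (1 : Matrix (Fin n) (Fin n) ℝ)
        = -(lam p • (1 : Matrix (Fin n) (Fin n) ℝ) - A.submatrix k.succAbove k.succAbove) from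
      (neg_sub _ _).symm, Matrix.det_neg, Fintype.card_fin, ← hdetsub, hminor]
  rw [hfinal, ← mul_assoc]
  have hple : (p:ℕ) ≤ n := Fin.is_le p
  have hpow : (-1:ℝ)^(p:ℕ) * (-1:ℝ)^n = (-1:ℝ)^(n - (p:ℕ)) := by
    rw [← pow_add, show (p:ℕ) + n = (n - (p:ℕ)) + 2 * (p:ℕ) by omega, pow_add, pow_mul]
    norm_num
  rw [hpow]
  exact hsign

theorem symmetrizable_submatrix_charpoly_sign (n : ℕ) (hn : 1 ≤ n)
    (A : Matrix (Fin (n + 1)) (Fin (n + 1)) ℝ) (hA : A.Symmetrizable)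
    (lam : Fin (n + 1) → ℝ) (hlam : Monotone lam)
    (hlamEig : A.charpoly = ∏ i, (X - C (lam i)))
    (k : Fin (n + 1)) :
    ∀ p : Fin (n + 1),
      0 ≤ (-1 : ℝ) ^ (p : ℕ) *
        (A.submatrix k.succAbove k.succAbove -
          lam p • (1 : Matrix (Fin n) (Fin n) ℝ)).det := by
  exact symmetrizable_submatrix_charpoly_sign' n hn A hA lam hlam hlamEig k
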